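/- Let K ⊆ ℝ^d be a nonempty closed convex set, let v ∈ ℝ^d be a translation vector (so that K + v is the 'optimal' position), let P ∈ K + v with dist(P, K) ≥ ε, and let Q be the closest point of K to P. If the polytope K is translated by P - Q (so the new translation offset from optimal is v - (P - Q)), then ‖v - (P - Q)‖² ≤ ‖v‖² - ε². -/

import Mathlib

theorem mincon_progress (d : ℕ) (K : Set (EuclideanSpace ℝ (Fin d)))
    (hK : K.Nonempty) (hKc : IsClosed K) (hKconv : Convex ℝ K)
    (v : EuclideanSpace ℝ (Fin d)) (P : EuclideanSpace ℝ (Fin d))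
    (hP : P ∈ (fun x => x + v) '' K) (ε : ℝ) (hε : 0 ≤ ε)
    (hfar : ε ≤ Metric.infDist P K)
    (Q : EuclideanSpace ℝ (Fin d)) (hQ : Q ∈ K)
    (hQmin : ∀ y ∈ K, dist P Q ≤ dist P y) :
    ‖v - (P - Q)‖ ^ 2 ≤ ‖v‖ ^ 2 - ε ^ 2 := by
  obtain ⟨P', hP', hPv⟩ := hP
  simp only at hPv
  have hnorm : ‖P - Q‖ = ⨅ w : K, ‖P - w‖ := by
    haveI : Nonempty K := ⟨⟨Q, hQ⟩⟩
    apply le_antisymm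
    · exact le_ciInf fun w => by
        simpa [dist_eq_norm] using hQmin w w.2
    · exact ciInf_le ⟨0, fun _ ⟨_, h⟩ => h ▸ norm_nonneg _⟩ (⟨Q, hQ⟩ : K)
  have hobtuse : (inner ℝ (P - Q) (P' - Q) : ℝ) ≤ 0 :=
    (norm_eq_iInf_iff_real_inner_le_zero hKconv hQ).mp hnorm P' hP'
  have hεd : ε ≤ ‖P - Q‖ := by
    refine hfar.trans ?_
    simpa [dist_eq_norm] using Metric.infDist_le_dist_of_mem hQ
  have hv : v = P - P' := by rw [← hPv]; abel
  have key : ‖v - (P - Q)‖ ^ 2 = ‖v‖ ^ 2 - ‖P - Q‖ ^ 2 + 2 * (inner ℝ (P - Q) (P' - Q) : ℝ) := by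
    have h1 : v - (P - Q) = Q - P' := by rw [hv]; abel
    have h2 : (P - P') = (P - Q) + (Q - P') := by abel
    rw [h1, hv, h2, @norm_add_sq_real]
    have : (inner ℝ (P - Q) (Q - P') : ℝ) = - (inner ℝ (P - Q) (P' - Q) : ℝ) := by
      rw [← inner_neg_right]; congr 1; abel
    rw [this]; ring
  have hε2 : ε ^ 2 ≤ ‖P - Q‖ ^ 2 := by
    apply pow_le_pow_left₀ hε hεd
  nlinarith
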